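/- The polygonal chain (0,0)-(0,2)-(1/2, 2−√15/2)-(1,2)-(1,0)-(3/2, √15/2)-(2,0)-(2,2) visits every point of the grid {0,1,2}×{0,1,2} ⊂ ℝ². -/

import Mathlib

noncomputable def pt2 (a b : ℝ) : EuclideanSpace ℝ (Fin 2) := WithLp.toLp 2 ![a, b]

/-- The vertices of the path `P_{3,3}` produced by the MΛI-algorithm. -/
noncomputable def P33 : Fin 8 → EuclideanSpace ℝ (Fin 2) :=
  ![pt2 0 0, pt2 0 2, pt2 (1 / 2) (2 - Real.sqrt 15 / 2), pt2 1 2, pt2 1 0,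
    pt2 (3 / 2) (Real.sqrt 15 / 2), pt2 2 0, pt2 2 2]

lemma vert_mem (x c d y t : ℝ) (h0 : 0 ≤ t) (h1 : t ≤ 1) (h : (1 - t) * c + t * d = y) :
    pt2 x y ∈ segment ℝ (pt2 x c) (pt2 x d) := by
  refine ⟨1 - t, t, by linarith, h0, by ring, ?_⟩
  ext i
  fin_cases i <;>
    simp [pt2, EuclideanSpace, PiLp, WithLp] <;> linarith

/-- The chain `(0,0)-(0,2)-(1/2, 2−√15/2)-(1,2)-(1,0)-(3/2, √15/2)-(2,0)-(2,2)` visits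
every point of the grid `{0,1,2} × {0,1,2}`: each grid point lies on one of its closed
straight-line segments. -/
theorem stmt6 :
    ∀ a b : ℝ, a ∈ ({0, 1, 2} : Set ℝ) → b ∈ ({0, 1, 2} : Set ℝ) →
      ∃ i : Fin 7, pt2 a b ∈ segment ℝ (P33 i.castSucc) (P33 i.succ) := by
  rintro a b (rfl | rfl | rfl) hb <;>
  [ (refine ⟨0, ?_⟩; show pt2 0 b ∈ segment ℝ (pt2 0 0) (pt2 0 2));
    (refine ⟨3, ?_⟩; show pt2 1 b ∈ segment ℝ (pt2 1 2) (pt2 1 0));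
    (refine ⟨6, ?_⟩; show pt2 2 b ∈ segment ℝ (pt2 2 0) (pt2 2 2)) ] <;>
  rcases hb with rfl | rfl | rfl <;>
  first
    | (refine vert_mem _ _ _ _ 0 ?_ ?_ ?_ <;> norm_num; done)
    | (refine vert_mem _ _ _ _ (1/2) ?_ ?_ ?_ <;> norm_num; done)
    | (refine vert_mem _ _ _ _ 1 ?_ ?_ ?_ <;> norm_num; done)
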